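/- Let M ≥ 2 and M ≤ δ ≤ M², and define f(κ) = ((M + 2κδ)M² − 2δM(1+κ) + δ²)/((1+κ)²) for κ ≥ 0, and κ₂* = (δ − M)(M² − δ)/(δM(M−1)) (which is ≥ 0 in this range of δ). Then f is monotonically increasing on [0, κ₂*] and monotonically decreasing on [κ₂*, ∞); in particular f(κ) ≤ f(κ₂*) for all κ ≥ 0. That is, the variance of the harvested energy under the Switching-Antennas (and under the optimal beamforming AA-CSI) scheme, as a function of the Rician factor κ, attains its maximum at κ = (δ−M)(M²−δ)/(δM(M−1)). -/

import Mathlib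

/-- For `M ≥ 2` and `M ≤ δ ≤ M²`, the (SA / AA-CSI) variance profile
`f(κ) = ((M + 2κδ)M² − 2δM(1+κ) + δ²)/(1+κ)²` is increasing on `[0, κ₂*]` and
decreasing on `[κ₂*, ∞)`, where `κ₂* = (δ−M)(M²−δ)/(δM(M−1)) ≥ 0`; in particular
`f(κ) ≤ f(κ₂*)` for all `κ ≥ 0`. -/
theorem SA_variance_vs_kappa (M : ℕ) (hM : 2 ≤ M) (δ : ℝ)
    (hδ1 : (M : ℝ) ≤ δ) (hδ2 : δ ≤ (M : ℝ) ^ 2)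
    (f : ℝ → ℝ)
    (hf : ∀ κ : ℝ, f κ = (((M : ℝ) + 2 * κ * δ) * (M : ℝ) ^ 2
      - 2 * δ * (M : ℝ) * (1 + κ) + δ ^ 2) / (1 + κ) ^ 2)
    (κ₂ : ℝ) (hκ₂ : κ₂ = (δ - (M : ℝ)) * ((M : ℝ) ^ 2 - δ) / (δ * (M : ℝ) * ((M : ℝ) - 1))) :
    0 ≤ κ₂ ∧
    MonotoneOn f (Set.Icc 0 κ₂) ∧
    AntitoneOn f (Set.Ici κ₂) ∧
    ∀ κ : ℝ, 0 ≤ κ → f κ ≤ f κ₂ := by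
  have hMR : (2 : ℝ) ≤ (M : ℝ) := by exact_mod_cast hM
  have hδpos : (0 : ℝ) < δ := by linarith
  have hden : (0 : ℝ) < δ * (M : ℝ) * ((M : ℝ) - 1) := by nlinarith
  have hκ0 : 0 ≤ κ₂ := by
    rw [hκ₂]
    apply div_nonneg _ hden.le
    nlinarith
  have key : κ₂ * (δ * (M : ℝ) * ((M : ℝ) - 1)) = (δ - (M : ℝ)) * ((M : ℝ) ^ 2 - δ) := by
    rw [hκ₂]; exact div_mul_cancel₀ _ hden.ne'
  have hmono : MonotoneOn f (Set.Icc 0 κ₂) := by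
    rintro a ⟨ha0, haκ⟩ b ⟨hb0, hbκ⟩ hab
    rw [hf, hf, div_le_div_iff₀ (by positivity) (by positivity)]
    nlinarith [mul_nonneg (sub_nonneg.2 hab) (mul_nonneg (sub_nonneg.2 hbκ) hden.le),
      mul_nonneg (mul_nonneg (sub_nonneg.2 hab) (sub_nonneg.2 hbκ)) (mul_nonneg ha0 hden.le),
      mul_nonneg (mul_nonneg (sub_nonneg.2 hab) (sub_nonneg.2 hbκ)) (mul_nonneg hb0 hden.le),
      mul_nonneg (mul_nonneg (sub_nonneg.2 hab) (sub_nonneg.2 hab)) hden.le,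
      mul_nonneg (mul_nonneg (mul_nonneg (sub_nonneg.2 hab) (sub_nonneg.2 hab)) hb0) hden.le,
      mul_nonneg (mul_nonneg (sub_nonneg.2 hab) ha0) (mul_nonneg hb0 hden.le), key]
  have hanti : AntitoneOn f (Set.Ici κ₂) := by
    rintro a ha b hb hab
    have ha : κ₂ ≤ a := ha
    have hb : κ₂ ≤ b := hb
    have ha0 : 0 ≤ a := le_trans hκ0 ha
    have hb0 : 0 ≤ b := le_trans hκ0 hb
    rw [hf, hf, div_le_div_iff₀ (by positivity) (by positivity)]
    nlinarith [mul_nonneg (sub_nonneg.2 hab) (mul_nonneg (sub_nonneg.2 ha) hden.le),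
      mul_nonneg (mul_nonneg (sub_nonneg.2 hab) (sub_nonneg.2 ha)) (mul_nonneg ha0 hden.le),
      mul_nonneg (mul_nonneg (sub_nonneg.2 hab) (sub_nonneg.2 ha)) (mul_nonneg hb0 hden.le),
      mul_nonneg (mul_nonneg (sub_nonneg.2 hab) (sub_nonneg.2 hab)) hden.le,
      mul_nonneg (mul_nonneg (mul_nonneg (sub_nonneg.2 hab) (sub_nonneg.2 hab)) ha0) hden.le,
      mul_nonneg (mul_nonneg (sub_nonneg.2 hab) ha0) (mul_nonneg hb0 hden.le), key]
  refine ⟨hκ0, hmono, hanti, fun κ hκ => ?_⟩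
  rcases le_total κ κ₂ with h | h
  · exact hmono ⟨hκ, h⟩ ⟨hκ0, le_refl _⟩ h
  · exact hanti (Set.mem_Ici.2 (le_refl _)) h h
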